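/- Let k be a field whose characteristic is neither 2 nor 3. Let V = {f : Fin 3 → k : f(0) + f(1) + f(2) = 0}, a 2-dimensional k-vector space on which the symmetric group S₃ = Perm(Fin 3) acts by permuting coordinates (σ·f = f ∘ σ⁻¹); denote this representation by ρ. Let Ad⁰(V) be the space of k-linear endomorphisms of V of trace zero, with S₃ acting by conjugation: σ·φ = ρ(σ) ∘ φ ∘ ρ(σ)⁻¹. Then Ad⁰(V) is isomorphic as a representation of S₃ to the direct sum V ⊕ sgn: there exists a k-linear isomorphism e : Ad⁰(V) → V × k such that for all σ ∈ S₃ and φ ∈ Ad⁰(V), e(σ·φ) = (σ·(e φ)₁, sgn(σ)·(e φ)₂), where sgn(σ) ∈ {±1} ⊆ k is the sign of the permutation σ. -/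

import Mathlib

/-- The linear functional `f ↦ f 0 + f 1 + f 2` on `Fin 3 → k`. -/
noncomputable def sumForm (k : Type*) [Field k] : (Fin 3 → k) →ₗ[k] k :=
  (LinearMap.proj (0 : Fin 3) : (Fin 3 → k) →ₗ[k] k) +
    (LinearMap.proj (1 : Fin 3) : (Fin 3 → k) →ₗ[k] k) +
    (LinearMap.proj (2 : Fin 3) : (Fin 3 → k) →ₗ[k] k)

/-- The standard 2-dimensional representation space of `S₃`: the sum-zero functions
`Fin 3 → k`. -/
noncomputable def stdRep (k : Type*) [Field k] : Submodule k (Fin 3 → k) :=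
  LinearMap.ker (sumForm k)

/-- The action of `S₃ = Perm (Fin 3)` on the standard representation, `σ·f = f ∘ σ⁻¹`. -/
noncomputable def rho (k : Type*) [Field k] (σ : Equiv.Perm (Fin 3)) :
    stdRep k →ₗ[k] stdRep k where
  toFun f := ⟨fun i => (f : Fin 3 → k) (σ⁻¹ i), by
    have key : ∀ g : Fin 3 → k, sumForm k g = ∑ i, g i := fun g => by
      simp [sumForm, Fin.sum_univ_three]
    have hf : sumForm k (f : Fin 3 → k) = 0 := f.2
    have : sumForm k (fun i => (f : Fin 3 → k) (σ⁻¹ i)) = 0 := by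
      rw [key]
      rw [Equiv.sum_comp σ⁻¹ (fun i => (f : Fin 3 → k) i)]
      rw [← key, hf]
    exact this⟩
  map_add' f g := by
    apply Subtype.ext
    funext i
    rfl
  map_smul' a f := by
    apply Subtype.ext
    funext i
    rfl

namespace Ad0Aux

variable (k : Type*) [Field k]

lemma mem_stdRep_iff (f : Fin 3 → k) : f ∈ stdRep k ↔ f 0 + f 1 + f 2 = 0 := by
  simp [stdRep, sumForm, LinearMap.mem_ker]

/-- the element of `stdRep` with coordinates `a`, `b`. -/
def vmk (a b : k) : stdRep k :=
  ⟨![a, b, -a - b], by rw [mem_stdRep_iff]; show a + b + (-a-b) = 0; ring⟩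

@[simp] lemma vmk_c0 (a b : k) : (vmk k a b : Fin 3 → k) 0 = a := rfl
@[simp] lemma vmk_c1 (a b : k) : (vmk k a b : Fin 3 → k) 1 = b := rfl
@[simp] lemma vmk_c2 (a b : k) : (vmk k a b : Fin 3 → k) 2 = -a - b := rfl

lemma eq_vmk (v : stdRep k) : v = vmk k ((v : Fin 3 → k) 0) ((v : Fin 3 → k) 1) := by
  have h := (mem_stdRep_iff k _).mp v.2
  apply Subtype.ext
  funext i
  fin_cases i
  · rfl
  · rfl
  · show (v : Fin 3 → k) 2 = -(v : Fin 3 → k) 0 - (v : Fin 3 → k) 1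
    linear_combination h

lemma vmk_add (a b c d : k) : vmk k (a + c) (b + d) = vmk k a b + vmk k c d := by
  apply Subtype.ext
  funext i
  fin_cases i <;> show _ = (vmk k a b : Fin 3 → k) _ + (vmk k c d : Fin 3 → k) _ <;> simp <;> ring

lemma vmk_smul (t a b : k) : vmk k (t * a) (t * b) = t • vmk k a b := by
  apply Subtype.ext
  funext i
  fin_cases i <;> show _ = t * (vmk k a b : Fin 3 → k) _ <;> simp <;> ring

lemma vmk_expand (a b : k) : vmk k a b = a • vmk k 1 0 + b • vmk k 0 1 := by
  rw [← vmk_smul, ← vmk_smul, ← vmk_add]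
  congr 1 <;> ring

@[simp] lemma rho_coord (σ : Equiv.Perm (Fin 3)) (f : stdRep k) (i : Fin 3) :
    (rho k σ f : Fin 3 → k) i = (f : Fin 3 → k) (σ⁻¹ i) := rfl


/-- coordinate equivalence -/
noncomputable def coordEquiv : stdRep k ≃ₗ[k] (Fin 2 → k) where
  toFun v := ![(v : Fin 3 → k) 0, (v : Fin 3 → k) 1]
  invFun c := vmk k (c 0) (c 1)
  map_add' v w := by funext i; fin_cases i <;> rfl
  map_smul' t v := by funext i; fin_cases i <;> rfl
  left_inv v := by
    show vmk k (![(v : Fin 3 → k) 0, (v : Fin 3 → k) 1] 0) (![(v : Fin 3 → k) 0, (v : Fin 3 → k) 1] 1) = v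
    simp only [Matrix.cons_val_zero, Matrix.cons_val_one, Matrix.head_cons]
    exact (eq_vmk k v).symm
  right_inv c := by funext i; fin_cases i <;> rfl

/-- the standard basis of `stdRep`. -/
noncomputable def stdBasis : Module.Basis (Fin 2) k (stdRep k) := Module.Basis.ofEquivFun (coordEquiv k)

lemma stdBasis_zero : stdBasis k 0 = vmk k 1 0 := by
  rw [stdBasis, Module.Basis.coe_ofEquivFun]
  show vmk k _ _ = _
  norm_num

lemma stdBasis_one : stdBasis k 1 = vmk k 0 1 := by
  rw [stdBasis, Module.Basis.coe_ofEquivFun]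
  show vmk k _ _ = _
  norm_num

lemma trace_eq (φ : stdRep k →ₗ[k] stdRep k) :
    LinearMap.trace k (stdRep k) φ
      = (φ (vmk k 1 0) : Fin 3 → k) 0 + (φ (vmk k 0 1) : Fin 3 → k) 1 := by
  rw [LinearMap.trace_eq_matrix_trace k (stdBasis k) φ]
  rw [Matrix.trace]
  rw [Fin.sum_univ_two]
  have h0 : (LinearMap.toMatrix (stdBasis k) (stdBasis k) φ) 0 0
      = (φ (vmk k 1 0) : Fin 3 → k) 0 := by
    rw [LinearMap.toMatrix_apply, stdBasis_zero, stdBasis]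
    simp [Module.Basis.ofEquivFun_repr_apply, coordEquiv]
  have h1 : (LinearMap.toMatrix (stdBasis k) (stdBasis k) φ) 1 1
      = (φ (vmk k 0 1) : Fin 3 → k) 1 := by
    rw [LinearMap.toMatrix_apply, stdBasis_one, stdBasis]
    simp [Module.Basis.ofEquivFun_repr_apply, coordEquiv]
  rw [Matrix.diag_apply, Matrix.diag_apply, h0, h1]

@[simp] lemma coord_add (x y : stdRep k) (i : Fin 3) :
    ((x + y : stdRep k) : Fin 3 → k) i = (x : Fin 3 → k) i + (y : Fin 3 → k) i := rfl

@[simp] lemma coord_smul (t : k) (x : stdRep k) (i : Fin 3) :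
    ((t • x : stdRep k) : Fin 3 → k) i = t * (x : Fin 3 → k) i := rfl

/-- the forward map of the decomposition, on all endomorphisms. -/
noncomputable def Emap : (stdRep k →ₗ[k] stdRep k) →ₗ[k] (stdRep k × k) where
  toFun φ := (vmk k (-2 * (φ (vmk k 1 0) : Fin 3 → k) 0 + (φ (vmk k 0 1) : Fin 3 → k) 0)
                    (2 * (φ (vmk k 1 0) : Fin 3 → k) 0 + (φ (vmk k 1 0) : Fin 3 → k) 1),
              (φ (vmk k 0 1) : Fin 3 → k) 0 - (φ (vmk k 1 0) : Fin 3 → k) 1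
                - (φ (vmk k 1 0) : Fin 3 → k) 0)
  map_add' φ ψ := by
    simp only [LinearMap.add_apply, coord_add, Prod.mk_add_mk]
    refine Prod.ext ?_ ?_
    · show vmk k _ _ = vmk k _ _ + vmk k _ _
      rw [← vmk_add]; congr 1 <;> ring
    · show _ = _
      ring
  map_smul' t φ := by
    simp only [LinearMap.smul_apply, coord_smul, RingHom.id_apply, Prod.smul_mk]
    refine Prod.ext ?_ ?_
    · show vmk k _ _ = t • vmk k _ _
      rw [← vmk_smul]; congr 1 <;> ring
    · show _ = t * _
      ring

/-- the endomorphism with matrix `[[p, r], [q, s]]` in the basis `vmk 1 0, vmk 0 1`. -/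
noncomputable def endo (p q r s : k) : stdRep k →ₗ[k] stdRep k where
  toFun f := vmk k (p * (f : Fin 3 → k) 0 + r * (f : Fin 3 → k) 1)
                   (q * (f : Fin 3 → k) 0 + s * (f : Fin 3 → k) 1)
  map_add' f g := by
    simp only [coord_add]
    rw [← vmk_add]; congr 1 <;> ring
  map_smul' t f := by
    simp only [coord_smul, RingHom.id_apply]
    rw [← vmk_smul]; congr 1 <;> ring

lemma endo_u (p q r s : k) : endo k p q r s (vmk k 1 0) = vmk k p q := by
  show vmk k _ _ = _
  norm_num

lemma endo_w (p q r s : k) : endo k p q r s (vmk k 0 1) = vmk k r s := by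
  show vmk k _ _ = _
  norm_num

lemma apply_vmk (φ : stdRep k →ₗ[k] stdRep k) (a b : k) :
    φ (vmk k a b)
      = vmk k (a * (φ (vmk k 1 0) : Fin 3 → k) 0 + b * (φ (vmk k 0 1) : Fin 3 → k) 0)
              (a * (φ (vmk k 1 0) : Fin 3 → k) 1 + b * (φ (vmk k 0 1) : Fin 3 → k) 1) := by
  conv_lhs => rw [vmk_expand, map_add, map_smul, map_smul,
    eq_vmk k (φ (vmk k 1 0)), eq_vmk k (φ (vmk k 0 1)),
    ← vmk_smul, ← vmk_smul, ← vmk_add]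

lemma eq_endo (φ : stdRep k →ₗ[k] stdRep k) :
    φ = endo k ((φ (vmk k 1 0) : Fin 3 → k) 0) ((φ (vmk k 1 0) : Fin 3 → k) 1)
               ((φ (vmk k 0 1) : Fin 3 → k) 0) ((φ (vmk k 0 1) : Fin 3 → k) 1) := by
  set p := (φ (vmk k 1 0) : Fin 3 → k) 0
  set q := (φ (vmk k 1 0) : Fin 3 → k) 1
  set r := (φ (vmk k 0 1) : Fin 3 → k) 0
  set s := (φ (vmk k 0 1) : Fin 3 → k) 1
  refine LinearMap.ext fun f => ?_
  conv_lhs => rw [eq_vmk k f]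
  conv_rhs => rw [eq_vmk k f]
  rw [apply_vmk, apply_vmk k (endo k p q r s), endo_u, endo_w]
  simp only [vmk_c0, vmk_c1]
  rfl

lemma endo_add (p q r s p' q' r' s' : k) :
    endo k (p + p') (q + q') (r + r') (s + s') = endo k p q r s + endo k p' q' r' s' := by
  refine LinearMap.ext fun f => ?_
  show vmk k _ _ = vmk k _ _ + vmk k _ _
  rw [← vmk_add]; congr 1 <;> ring

lemma endo_smul (t p q r s : k) :
    endo k (t * p) (t * q) (t * r) (t * s) = t • endo k p q r s := by
  refine LinearMap.ext fun f => ?_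
  show vmk k _ _ = t • vmk k _ _
  rw [← vmk_smul]; congr 1 <;> ring

lemma trace_endo (p q r s : k) : LinearMap.trace k (stdRep k) (endo k p q r s) = p + s := by
  rw [trace_eq, endo_u, endo_w, vmk_c0, vmk_c1]

lemma three_ne_zero' (h3 : ringChar k ≠ 3) : (3 : k) ≠ 0 := by
  intro h
  exact h3 (CharP.ringChar_of_prime_eq_zero Nat.prime_three (by exact_mod_cast h))

/-- the inverse map of the decomposition. -/
noncomputable def Fmap : (stdRep k × k) →ₗ[k] (stdRep k →ₗ[k] stdRep k) where
  toFun x :=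
    endo k ((3:k)⁻¹ * (x.2 - (x.1 : Fin 3 → k) 0 + (x.1 : Fin 3 → k) 1))
           ((3:k)⁻¹ * (2 * (x.1 : Fin 3 → k) 0 + (x.1 : Fin 3 → k) 1 - 2 * x.2))
           ((3:k)⁻¹ * ((x.1 : Fin 3 → k) 0 + 2 * (x.1 : Fin 3 → k) 1 + 2 * x.2))
           (-((3:k)⁻¹ * (x.2 - (x.1 : Fin 3 → k) 0 + (x.1 : Fin 3 → k) 1)))
  map_add' x y := by
    simp only [Prod.fst_add, Prod.snd_add, coord_add]
    rw [← endo_add]; congr 1 <;> ring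
  map_smul' t x := by
    simp only [Prod.smul_fst, Prod.smul_snd, coord_smul, smul_eq_mul, RingHom.id_apply]
    rw [← endo_smul]; congr 1 <;> ring

lemma trace_Fmap (x : stdRep k × k) : LinearMap.trace k (stdRep k) (Fmap k x) = 0 := by
  show LinearMap.trace k (stdRep k) (endo k _ _ _ _) = 0
  rw [trace_endo]; ring

lemma stdRep_ext (v w : stdRep k) (h0 : (v : Fin 3 → k) 0 = (w : Fin 3 → k) 0)
    (h1 : (v : Fin 3 → k) 1 = (w : Fin 3 → k) 1) : v = w := by
  rw [eq_vmk k v, eq_vmk k w, h0, h1]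

lemma coord2 (v : stdRep k) :
    (v : Fin 3 → k) 2 = -(v : Fin 3 → k) 0 - (v : Fin 3 → k) 1 := by
  have h := (mem_stdRep_iff k _).mp v.2
  linear_combination h

lemma Emap_fst (φ : stdRep k →ₗ[k] stdRep k) :
    (Emap k φ).1 = vmk k (-2 * (φ (vmk k 1 0) : Fin 3 → k) 0 + (φ (vmk k 0 1) : Fin 3 → k) 0)
      (2 * (φ (vmk k 1 0) : Fin 3 → k) 0 + (φ (vmk k 1 0) : Fin 3 → k) 1) := rfl

lemma Emap_snd (φ : stdRep k →ₗ[k] stdRep k) :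
    (Emap k φ).2 = (φ (vmk k 0 1) : Fin 3 → k) 0 - (φ (vmk k 1 0) : Fin 3 → k) 1
      - (φ (vmk k 1 0) : Fin 3 → k) 0 := rfl

lemma Fmap_apply (x : stdRep k × k) :
    Fmap k x = endo k ((3:k)⁻¹ * (x.2 - (x.1 : Fin 3 → k) 0 + (x.1 : Fin 3 → k) 1))
           ((3:k)⁻¹ * (2 * (x.1 : Fin 3 → k) 0 + (x.1 : Fin 3 → k) 1 - 2 * x.2))
           ((3:k)⁻¹ * ((x.1 : Fin 3 → k) 0 + 2 * (x.1 : Fin 3 → k) 1 + 2 * x.2))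
           (-((3:k)⁻¹ * (x.2 - (x.1 : Fin 3 → k) 0 + (x.1 : Fin 3 → k) 1))) := rfl

/-- The isomorphism. -/
noncomputable def eqv (h3 : (3 : k) ≠ 0) :
    (LinearMap.ker (LinearMap.trace k (stdRep k))) ≃ₗ[k] (stdRep k × k) :=
  LinearEquiv.ofLinear
    ((Emap k) ∘ₗ (LinearMap.ker (LinearMap.trace k (stdRep k))).subtype)
    (LinearMap.codRestrict _ (Fmap k) fun x => LinearMap.mem_ker.mpr (trace_Fmap k x))
    (by
      refine LinearMap.ext fun x => ?_
      show Emap k (Fmap k x) = x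
      rw [Fmap_apply]
      refine Prod.ext ?_ ?_
      · rw [Emap_fst, endo_u, endo_w, vmk_c0, vmk_c0, vmk_c1]
        refine stdRep_ext k _ _ ?_ ?_
        · rw [vmk_c0]; field_simp; ring
        · rw [vmk_c1]; field_simp; ring
      · rw [Emap_snd, endo_u, endo_w, vmk_c0, vmk_c1, vmk_c0]
        show _ = x.2
        field_simp; ring)
    (by
      refine LinearMap.ext fun x => Subtype.ext ?_
      show Fmap k (Emap k ((x : stdRep k →ₗ[k] stdRep k))) = (x : stdRep k →ₗ[k] stdRep k)
      have hx : (((x : stdRep k →ₗ[k] stdRep k)) (vmk k 1 0) : Fin 3 → k) 0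
          + (((x : stdRep k →ₗ[k] stdRep k)) (vmk k 0 1) : Fin 3 → k) 1 = 0 := by
        rw [← trace_eq]; exact x.2
      rw [Fmap_apply, Emap_fst, Emap_snd]
      conv_rhs => rw [eq_endo k (x : stdRep k →ₗ[k] stdRep k)]
      rw [vmk_c0, vmk_c1]
      congr 1 <;> field_simp <;> first
        | linear_combination (-3:k) * hx
        | linear_combination (-6:k) * hx
        | ring)

lemma eqv_apply (h3 : (3 : k) ≠ 0) (x : LinearMap.ker (LinearMap.trace k (stdRep k))) :
    eqv k h3 x = Emap k (x : stdRep k →ₗ[k] stdRep k) := by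
  simp [eqv]

lemma rho_mul (σ τ : Equiv.Perm (Fin 3)) : rho k (σ * τ) = rho k σ ∘ₗ rho k τ := by
  refine LinearMap.ext fun f => Subtype.ext ?_
  funext i
  show (f : Fin 3 → k) ((σ * τ)⁻¹ i) = (f : Fin 3 → k) (τ⁻¹ (σ⁻¹ i))
  rw [mul_inv_rev]
  rfl

lemma rho_one : rho k 1 = LinearMap.id := by
  refine LinearMap.ext fun f => Subtype.ext ?_
  funext i
  rfl

lemma trace_conj (σ : Equiv.Perm (Fin 3)) (φ : stdRep k →ₗ[k] stdRep k) :
    LinearMap.trace k (stdRep k) (rho k σ ∘ₗ φ ∘ₗ rho k σ⁻¹)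
      = LinearMap.trace k (stdRep k) φ := by
  have h := LinearMap.trace_mul_comm k (rho k σ) (φ ∘ₗ rho k σ⁻¹)
  simp only [Module.End.mul_eq_comp] at h
  rw [← LinearMap.comp_assoc] at h ⊢
  rw [h, LinearMap.comp_assoc, ← rho_mul, inv_mul_cancel, rho_one, LinearMap.comp_id]

lemma apply_vmk' (φ : stdRep k →ₗ[k] stdRep k) (a b : k) :
    φ (vmk k a b) = a • φ (vmk k 1 0) + b • φ (vmk k 0 1) := by
  rw [vmk_expand, map_add, map_smul, map_smul]

lemma conj_coord (σ : Equiv.Perm (Fin 3)) (φ : stdRep k →ₗ[k] stdRep k) (a b : k) (i : Fin 3) :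
    ((rho k σ ∘ₗ φ ∘ₗ rho k σ⁻¹) (vmk k a b) : Fin 3 → k) i
      = (vmk k a b : Fin 3 → k) (σ 0) * (φ (vmk k 1 0) : Fin 3 → k) (σ⁻¹ i)
        + (vmk k a b : Fin 3 → k) (σ 1) * (φ (vmk k 0 1) : Fin 3 → k) (σ⁻¹ i) := by
  show (φ (rho k σ⁻¹ (vmk k a b)) : Fin 3 → k) (σ⁻¹ i) = _
  rw [eq_vmk k (rho k σ⁻¹ (vmk k a b)), apply_vmk', coord_add, coord_smul, coord_smul,
    rho_coord, rho_coord, inv_inv]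

set_option maxHeartbeats 2000000 in
lemma key_swap (x y : Fin 3) (hxy : x ≠ y) (φ : stdRep k →ₗ[k] stdRep k)
    (hφ : LinearMap.trace k (stdRep k) φ = 0) :
    Emap k (rho k (Equiv.swap x y) ∘ₗ φ ∘ₗ rho k (Equiv.swap x y)⁻¹)
      = (rho k (Equiv.swap x y) (Emap k φ).1,
          ((Equiv.Perm.sign (Equiv.swap x y) : ℤ) : k) * (Emap k φ).2) := by
  have hs : (φ (vmk k 0 1) : Fin 3 → k) 1 = -(φ (vmk k 1 0) : Fin 3 → k) 0 := by
    rw [trace_eq] at hφ; linear_combination hφ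
  have hsgn : ((Equiv.Perm.sign (Equiv.swap x y) : ℤ) : k) = -1 := by
    rw [Equiv.Perm.sign_swap hxy]; norm_num
  rw [hsgn]
  have hcases := (by decide :
    ∀ a b : Fin 3, a ≠ b → (a = 0 ∧ b = 1 ∨ a = 0 ∧ b = 2 ∨ a = 1 ∧ b = 0 ∨
      a = 1 ∧ b = 2 ∨ a = 2 ∧ b = 0 ∨ a = 2 ∧ b = 1))
  rcases hcases x y hxy with ⟨rfl,rfl⟩|⟨rfl,rfl⟩|⟨rfl,rfl⟩|⟨rfl,rfl⟩|⟨rfl,rfl⟩|⟨rfl,rfl⟩ <;>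
    refine Prod.ext (stdRep_ext k _ _ ?_ ?_) ?_ <;>
    (try simp only [Emap_fst, Emap_snd, vmk_c0, vmk_c1, conj_coord, rho_coord]) <;>
    (try simp only [Equiv.swap_inv, Equiv.swap_apply_def]) <;>
    (try norm_num [Fin.ext_iff]) <;>
    (try simp only [vmk_c0, vmk_c1, vmk_c2, coord2 k (φ (vmk k 1 0)),
      coord2 k (φ (vmk k 0 1)), hs]) <;>
    ring

lemma key (σ : Equiv.Perm (Fin 3)) (φ : stdRep k →ₗ[k] stdRep k)
    (hφ : LinearMap.trace k (stdRep k) φ = 0) :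
    Emap k (rho k σ ∘ₗ φ ∘ₗ rho k σ⁻¹)
      = (rho k σ (Emap k φ).1, ((Equiv.Perm.sign σ : ℤ) : k) * (Emap k φ).2) := by
  induction σ using Equiv.Perm.swap_induction_on generalizing φ
  case one =>
      rw [inv_one, rho_one]
      simp only [LinearMap.id_comp, LinearMap.comp_id, Equiv.Perm.sign_one]
      rw [show ((LinearMap.id : stdRep k →ₗ[k] stdRep k) (Emap k φ).1) = (Emap k φ).1 from rfl]
      norm_num
  next τ a b hab ih =>
      have hτ : LinearMap.trace k (stdRep k) (rho k τ ∘ₗ φ ∘ₗ rho k τ⁻¹)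
          = 0 := by rw [trace_conj]; exact hφ
      have hcomp : rho k (Equiv.swap a b * τ) ∘ₗ φ ∘ₗ rho k (Equiv.swap a b * τ)⁻¹
          = rho k (Equiv.swap a b) ∘ₗ (rho k τ ∘ₗ φ ∘ₗ rho k τ⁻¹) ∘ₗ rho k (Equiv.swap a b)⁻¹ := by
        rw [mul_inv_rev, rho_mul, rho_mul]
        simp only [LinearMap.comp_assoc]
      rw [hcomp, key_swap k a b hab _ hτ, ih φ hφ]
      refine Prod.ext ?_ ?_
      · show rho k (Equiv.swap a b) (rho k τ (Emap k φ).1) = rho k (Equiv.swap a b * τ) (Emap k φ).1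
        rw [rho_mul]
        rfl
      · show ((Equiv.Perm.sign (Equiv.swap a b) : ℤ) : k) * (((Equiv.Perm.sign τ : ℤ) : k) * _)
            = ((Equiv.Perm.sign (Equiv.swap a b * τ) : ℤ) : k) * _
        rw [map_mul]
        push_cast
        ring

end Ad0Aux

/-- `Ad⁰` of the standard 2-dimensional representation of `S₃` (trace-zero endomorphisms
with the conjugation action) is isomorphic, as a representation of `S₃`, to the direct sum
of the standard representation and the sign character. -/
theorem ad0_iso_std_sum_sign (k : Type*) [Field k]
    (h2 : ringChar k ≠ 2) (h3 : ringChar k ≠ 3) :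
    ∃ e : LinearMap.ker (LinearMap.trace k (stdRep k)) ≃ₗ[k] (stdRep k × k),
      ∀ (σ : Equiv.Perm (Fin 3)) (φ : stdRep k →ₗ[k] stdRep k)
        (hφ : φ ∈ LinearMap.ker (LinearMap.trace k (stdRep k)))
        (hφ' : rho k σ ∘ₗ φ ∘ₗ rho k σ⁻¹ ∈ LinearMap.ker (LinearMap.trace k (stdRep k))),
        e ⟨rho k σ ∘ₗ φ ∘ₗ rho k σ⁻¹, hφ'⟩ =
          (rho k σ (e ⟨φ, hφ⟩).1, ((Equiv.Perm.sign σ : ℤ) : k) * (e ⟨φ, hφ⟩).2) := by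
  refine ⟨Ad0Aux.eqv k (Ad0Aux.three_ne_zero' k h3), fun σ φ hφ hφ' => ?_⟩
  rw [Ad0Aux.eqv_apply, Ad0Aux.eqv_apply]
  exact Ad0Aux.key k σ φ (LinearMap.mem_ker.mp hφ)
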